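/- Let φ : ℝ^d → ℝ be strictly convex and differentiable with Bregman divergence d_φ(x, μ) = φ(x) − φ(μ) − ⟨∇φ(μ), x − μ⟩. Let P be a probability measure on ℝ^d such that the identity map is P-integrable and φ is P-integrable, and let m = ∫ x dP(x) be the barycenter of P. Then for every s ∈ ℝ^d such that x ↦ d_φ(x, s) is P-integrable, ∫ d_φ(x, s) dP(x) = ∫ d_φ(x, m) dP(x) + d_φ(m, s). Consequently, ∫ d_φ(x, s) dP(x) ≥ ∫ d_φ(x, m) dP(x), with equality if and only if s = m; i.e., the mean m uniquely minimizes the expected Bregman divergence s ↦ E[d_φ(X, s)]. -/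

import Mathlib

open Real MeasureTheory
open scoped RealInnerProductSpace

/-- Strict convexity gives a strict gradient inequality. -/
lemma bregman_strict_aux {d : ℕ} (φ : EuclideanSpace ℝ (Fin d) → ℝ)
    (hconv : StrictConvexOn ℝ Set.univ φ) (hdiff : Differentiable ℝ φ)
    (s m : EuclideanSpace ℝ (Fin d)) (hne : s ≠ m) :
    φ s + ⟪gradient φ s, m - s⟫ < φ m := by
  set v := m - s with hv
  have hv0 : v ≠ 0 := sub_ne_zero.mpr (Ne.symm hne)
  set ℓ : ℝ → EuclideanSpace ℝ (Fin d) := fun t => s + t • v with hℓ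
  have hℓinj : Function.Injective ℓ := by
    intro a b hab
    have h' : a • v = b • v := by simpa [hℓ] using hab
    exact smul_left_injective ℝ hv0 h'
  set g : ℝ → ℝ := fun t => φ (ℓ t) with hg
  have hgconv : StrictConvexOn ℝ Set.univ g := by
    refine ⟨convex_univ, fun x _ y _ hxy a b ha hb hab => ?_⟩
    have hxy' : ℓ x ≠ ℓ y := fun h => hxy (hℓinj h)
    have hs : a • s + b • s = s := by rw [← add_smul, hab, one_smul]
    have key : ℓ (a * x + b * y) = a • ℓ x + b • ℓ y := by
      simp only [hℓ]
      calc s + (a * x + b * y) • v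
          = (a • s + b • s) + ((a * x) • v + (b * y) • v) := by rw [hs, add_smul]
        _ = a • (s + x • v) + b • (s + y • v) := by
            rw [smul_add, smul_add, smul_smul, smul_smul]; abel
    calc g (a • x + b • y) = φ (a • ℓ x + b • ℓ y) := by
          simp only [hg, smul_eq_mul]; rw [key]
      _ < a • φ (ℓ x) + b • φ (ℓ y) :=
          hconv.2 (Set.mem_univ _) (Set.mem_univ _) hxy' ha hb hab
      _ = a • g x + b • g y := rfl
  have hℓder : ∀ t : ℝ, HasDerivAt ℓ v t := by
    intro t
    simpa [hℓ] using ((hasDerivAt_id t).smul_const v).const_add s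
  have hℓ0 : ℓ 0 = s := by simp [hℓ]
  have hgrad' : HasFDerivAt φ (InnerProductSpace.toDual ℝ _ (gradient φ s)) (ℓ 0) := by
    rw [hℓ0]
    exact hasGradientAt_iff_hasFDerivAt.mp (hdiff s).hasGradientAt
  have hgder : HasDerivAt g ⟪gradient φ s, v⟫ 0 := by
    have h := hgrad'.comp_hasDerivAt 0 (hℓder 0)
    simpa [hg, InnerProductSpace.toDual_apply_apply, Function.comp_def] using h
  have hslope := hgconv.lt_slope_of_hasDerivAt (Set.mem_univ (0:ℝ))
    (Set.mem_univ (1:ℝ)) one_pos hgder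
  have hg0 : g 0 = φ s := by simp [hg, hℓ0]
  have hg1 : g 1 = φ m := by simp [hg, hℓ, hv]
  rw [slope_def_field] at hslope
  simp only [hg0, hg1, div_one, sub_zero] at hslope
  linarith [hslope]

theorem bregman_mean_minimizer (d : ℕ)
    (φ : EuclideanSpace ℝ (Fin d) → ℝ)
    (hconv : StrictConvexOn ℝ Set.univ φ)
    (hdiff : Differentiable ℝ φ)
    (D : EuclideanSpace ℝ (Fin d) → EuclideanSpace ℝ (Fin d) → ℝ)
    (hD : ∀ x μ, D x μ = φ x - φ μ - ⟪gradient φ μ, x - μ⟫)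
    (P : Measure (EuclideanSpace ℝ (Fin d))) [IsProbabilityMeasure P]
    (hid : Integrable (fun x => x) P)
    (hφint : Integrable φ P)
    (m : EuclideanSpace ℝ (Fin d)) (hm : m = ∫ x, x ∂P) :
    ∀ s : EuclideanSpace ℝ (Fin d), Integrable (fun x => D x s) P →
      (∫ x, D x s ∂P = (∫ x, D x m ∂P) + D m s) ∧
      ((∫ x, D x m ∂P) ≤ ∫ x, D x s ∂P) ∧
      ((∫ x, D x s ∂P = ∫ x, D x m ∂P) ↔ s = m) := by
  intro s _
  have hint : ∀ μ : EuclideanSpace ℝ (Fin d),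
      ∫ x, D x μ ∂P = (∫ x, φ x ∂P) - φ μ - ⟪gradient φ μ, m - μ⟫ := by
    intro μ
    have hsub : Integrable (fun x => x - μ) P := hid.sub (integrable_const μ)
    have h1 : Integrable (fun x => ⟪gradient φ μ, x - μ⟫) P :=
      hsub.const_inner (gradient φ μ)
    have h2 : Integrable (fun x => φ x - φ μ) P := hφint.sub (integrable_const _)
    have Iinner : ∫ x, ⟪gradient φ μ, x - μ⟫ ∂P = ⟪gradient φ μ, m - μ⟫ := by
      rw [integral_inner hsub, integral_sub hid (integrable_const μ), integral_const]
      simp [hm]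
    have Iphi : ∫ x, (φ x - φ μ) ∂P = (∫ x, φ x ∂P) - φ μ := by
      rw [integral_sub hφint (integrable_const _), integral_const]
      simp
    calc ∫ x, D x μ ∂P = ∫ x, (φ x - φ μ) - ⟪gradient φ μ, x - μ⟫ ∂P := by
          simp only [hD]
      _ = (∫ x, (φ x - φ μ) ∂P) - ∫ x, ⟪gradient φ μ, x - μ⟫ ∂P :=
          integral_sub h2 h1
      _ = (∫ x, φ x ∂P) - φ μ - ⟪gradient φ μ, m - μ⟫ := by rw [Iinner, Iphi]
  have hDmm : ∫ x, D x m ∂P = (∫ x, φ x ∂P) - φ m := by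
    rw [hint m]; simp
  have heq : ∫ x, D x s ∂P = (∫ x, D x m ∂P) + D m s := by
    rw [hint s, hDmm, hD m s]; ring
  have hDms_nonneg : 0 ≤ D m s := by
    rcases eq_or_ne s m with h | h
    · subst h; rw [hD]; simp
    · have := bregman_strict_aux φ hconv hdiff s m h
      rw [hD]; linarith
  refine ⟨heq, by linarith, ?_⟩
  constructor
  · intro h
    by_contra hne
    have := bregman_strict_aux φ hconv hdiff s m hne
    have hz : D m s = 0 := by linarith
    rw [hD] at hz; linarith
  · intro h
    rw [h]
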